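/- Assume that d_{1,-1}, d_{1,0}, d_{1,1} are not all zero, d_{-1,-1}, d_{-1,0}, d_{-1,1} are not all zero, d_{-1,1}, d_{0,1}, d_{1,1} are not all zero, and d_{-1,-1}, d_{0,-1}, d_{1,-1} are not all zero. If K(x,y,t) = -f₁(x,y)·f₂(x,y) with f₁, f₂ ∈ ℂ[x,y] nonconstant, then f₁ and f₂ are irreducible in the ring ℂ[x,y]. -/

import Mathlib

open MvPolynomial

noncomputable section

variable (d : ℤ → ℤ → ℝ) (t : ℝ)

/-- The kernel polynomial `K(x,y,t) = xy(1 - t·Σ_{(i,j)∈{-1,0,1}²} d_{i,j} x^i y^j)`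
as an element of `ℂ[x,y] = MvPolynomial (Fin 2) ℂ` (variable `0` is `x`, variable `1` is `y`). -/
def kernelK : MvPolynomial (Fin 2) ℂ :=
  X 0 * X 1 - C ((t : ℝ) : ℂ) *
    ∑ i ∈ Finset.range 3, ∑ j ∈ Finset.range 3,
      C ((d ((i : ℤ) - 1) ((j : ℤ) - 1) : ℝ) : ℂ) * X 0 ^ i * X 1 ^ j

/-- The standing hypotheses: the weights `d_{i,j}` for `(i,j) ∈ {-1,0,1}²` lie in `[0,1]`
and sum to `1`, `t ∈ (0,1)`, and `t` is transcendental over `ℚ(d_{i,j})`, i.e. no nonzero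
polynomial with coefficients in the subfield of `ℝ` generated by the `d_{i,j}` vanishes at `t`. -/
def WalkHyp : Prop :=
  (∀ i ∈ ({-1, 0, 1} : Set ℤ), ∀ j ∈ ({-1, 0, 1} : Set ℤ), 0 ≤ d i j ∧ d i j ≤ 1) ∧
  (∑ i ∈ ({-1, 0, 1} : Finset ℤ), ∑ j ∈ ({-1, 0, 1} : Finset ℤ), d i j = 1) ∧
  (0 < t ∧ t < 1) ∧
  (∀ p : Polynomial ℝ,
      (∀ n, p.coeff n ∈
        Subfield.closure
          {x : ℝ | ∃ i ∈ ({-1, 0, 1} : Set ℤ), ∃ j ∈ ({-1, 0, 1} : Set ℤ), x = d i j}) →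
      Polynomial.eval t p = 0 → p = 0)

/-- The model is degenerate if `K` is reducible in `ℂ[x,y]`, or has degree `≤ 1` in `x`,
or degree `≤ 1` in `y`. -/
def Degenerate : Prop :=
  ¬ Irreducible (kernelK d t) ∨
    degreeOf 0 (kernelK d t) ≤ 1 ∨ degreeOf 1 (kernelK d t) ≤ 1

/-- The bihomogenized kernel
`K̄(x₀,x₁,y₀,y₁) = x₀x₁y₀y₁ - t Σ_{i,j=0}^{2} d_{i-1,j-1} x₀^i x₁^{2-i} y₀^j y₁^{2-j}`,
with variables `0 ↦ x₀`, `1 ↦ x₁`, `2 ↦ y₀`, `3 ↦ y₁`. -/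
def kernelKbar : MvPolynomial (Fin 4) ℂ :=
  X 0 * X 1 * X 2 * X 3 - C ((t : ℝ) : ℂ) *
    ∑ i ∈ Finset.range 3, ∑ j ∈ Finset.range 3,
      C ((d ((i : ℤ) - 1) ((j : ℤ) - 1) : ℝ) : ℂ) *
        X 0 ^ i * X 1 ^ (2 - i) * X 2 ^ j * X 3 ^ (2 - j)

/-- `([a:b],[c:e])` lies on the kernel curve `Ē_t ⊆ ℙ¹(ℂ)×ℙ¹(ℂ)`. -/
def OnKernelCurve (a b c e : ℂ) : Prop :=
  eval ![a, b, c, e] (kernelKbar d t) = 0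

/-- `([a:b],[c:e])` is a singular point of the kernel curve `Ē_t`: it lies on `Ē_t`
and all four partial derivatives of `K̄` vanish there. -/
def SingularAt (a b c e : ℂ) : Prop :=
  OnKernelCurve d t a b c e ∧
    ∀ k : Fin 4, eval ![a, b, c, e] (pderiv k (kernelKbar d t)) = 0

/-- `Ā₁(x₀,x₁)`: the coefficient of `y₀²` in `K̄`. -/
def Abar1 : MvPolynomial (Fin 2) ℂ :=
  -(C ((t : ℝ) : ℂ)) *
    (C ((d (-1) 1 : ℝ) : ℂ) * X 1 ^ 2 + C ((d 0 1 : ℝ) : ℂ) * X 0 * X 1 +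
      C ((d 1 1 : ℝ) : ℂ) * X 0 ^ 2)

/-- `B̄₁(x₀,x₁)`: the coefficient of `y₀y₁` in `K̄`. -/
def Bbar1 : MvPolynomial (Fin 2) ℂ :=
  X 0 * X 1 - C ((t : ℝ) : ℂ) *
    (C ((d (-1) 0 : ℝ) : ℂ) * X 1 ^ 2 + C ((d 0 0 : ℝ) : ℂ) * X 0 * X 1 +
      C ((d 1 0 : ℝ) : ℂ) * X 0 ^ 2)

/-- `C̄₁(x₀,x₁)`: the coefficient of `y₁²` in `K̄`. -/
def Cbar1 : MvPolynomial (Fin 2) ℂ :=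
  -(C ((t : ℝ) : ℂ)) *
    (C ((d (-1) (-1) : ℝ) : ℂ) * X 1 ^ 2 + C ((d 0 (-1) : ℝ) : ℂ) * X 0 * X 1 +
      C ((d 1 (-1) : ℝ) : ℂ) * X 0 ^ 2)

/-- The discriminant `Δ₁(x₀,x₁) = B̄₁² - 4Ā₁C̄₁`, homogeneous of degree 4. -/
def Delta1 : MvPolynomial (Fin 2) ℂ :=
  Bbar1 d t ^ 2 - 4 * Abar1 d t * Cbar1 d t

/-- `Ā₂(y₀,y₁)`: the coefficient of `x₀²` in `K̄`. -/
def Abar2 : MvPolynomial (Fin 2) ℂ :=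
  -(C ((t : ℝ) : ℂ)) *
    (C ((d 1 (-1) : ℝ) : ℂ) * X 1 ^ 2 + C ((d 1 0 : ℝ) : ℂ) * X 0 * X 1 +
      C ((d 1 1 : ℝ) : ℂ) * X 0 ^ 2)

/-- `B̄₂(y₀,y₁)`: the coefficient of `x₀x₁` in `K̄`. -/
def Bbar2 : MvPolynomial (Fin 2) ℂ :=
  X 0 * X 1 - C ((t : ℝ) : ℂ) *
    (C ((d 0 (-1) : ℝ) : ℂ) * X 1 ^ 2 + C ((d 0 0 : ℝ) : ℂ) * X 0 * X 1 +
      C ((d 0 1 : ℝ) : ℂ) * X 0 ^ 2)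

/-- `C̄₂(y₀,y₁)`: the coefficient of `x₁²` in `K̄`. -/
def Cbar2 : MvPolynomial (Fin 2) ℂ :=
  -(C ((t : ℝ) : ℂ)) *
    (C ((d (-1) (-1) : ℝ) : ℂ) * X 1 ^ 2 + C ((d (-1) 0 : ℝ) : ℂ) * X 0 * X 1 +
      C ((d (-1) 1 : ℝ) : ℂ) * X 0 ^ 2)

/-- The discriminant `Δ₂(y₀,y₁) = B̄₂² - 4Ā₂C̄₂`, homogeneous of degree 4. -/
def Delta2 : MvPolynomial (Fin 2) ℂ :=
  Bbar2 d t ^ 2 - 4 * Abar2 d t * Cbar2 d t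

/-- `[a:b] ∈ ℙ¹(ℂ)` is a double root of the homogeneous polynomial `p`:
`(bX - aY)²` divides `p(X,Y)`. -/
def IsDoubleRootAt (a b : ℂ) (p : MvPolynomial (Fin 2) ℂ) : Prop :=
  (C b * X 0 - C a * X 1) ^ 2 ∣ p

/-- The step set of the model is included in a closed half plane whose boundary passes
through the origin. -/
def StepSetInHalfPlane : Prop :=
  ∃ u v : ℝ, (u, v) ≠ (0, 0) ∧
    ∀ i ∈ ({-1, 0, 1} : Set ℤ), ∀ j ∈ ({-1, 0, 1} : Set ℤ),
      (i, j) ≠ (0, 0) → d i j ≠ 0 → 0 ≤ u * (i : ℝ) + v * (j : ℝ)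

/-- `α₂ = β₂` for the first family of (G0). -/
def alpha2 : ℝ := 1 - 2*t*(d 0 0) + t^2*(d 0 0)^2 - 4*t^2*(d (-1) 1)*(d 1 (-1))

/-- `α₃` for the first family of (G0). -/
def alpha3 : ℝ := 2*t^2*(d 1 0)*(d 0 0) - 2*t*(d 1 0) - 4*t^2*(d 0 1)*(d 1 (-1))

/-- `α₄` for the first family of (G0). -/
def alpha4 : ℝ := t^2*((d 1 0)^2 - 4*(d 1 1)*(d 1 (-1)))

/-- `β₃` for the first family of (G0). -/
def beta3 : ℝ := 2*t^2*(d 0 1)*(d 0 0) - 2*t*(d 0 1) - 4*t^2*(d 1 0)*(d (-1) 1)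

/-- `β₄` for the first family of (G0). -/
def beta4 : ℝ := t^2*((d 0 1)^2 - 4*(d 1 1)*(d (-1) 1))

/-- The kernel polynomial as a function `ℂ × ℂ → ℂ`:
`K(x,y,t) = xy - t Σ_{i,j=0}^{2} d_{i-1,j-1} x^i y^j`. -/
def kernelKfun (x y : ℂ) : ℂ :=
  x * y - ((t : ℝ) : ℂ) *
    ∑ i ∈ Finset.range 3, ∑ j ∈ Finset.range 3,
      ((d ((i : ℤ) - 1) ((j : ℤ) - 1) : ℝ) : ℂ) * x ^ i * y ^ j


-- Auxiliary lemmas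


lemma coeffs_mem (F : Subfield ℝ) {c0 c1 c2 : ℝ} (h0 : c0 ∈ F) (h1 : c1 ∈ F) (h2 : c2 ∈ F) :
    ∀ n, (Polynomial.C c0 + Polynomial.C c1 * Polynomial.X
      + Polynomial.C c2 * Polynomial.X ^ 2).coeff n ∈ F := by
  intro n
  match n with
  | 0 => simpa using h0
  | 1 => simpa using h1
  | 2 => simpa using h2
  | (m+3) =>
    simp [Polynomial.coeff_X_pow, Polynomial.coeff_X]

lemma pc0 (c0 c1 c2 : ℝ) :
    (Polynomial.C c0 + Polynomial.C c1 * Polynomial.X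
      + Polynomial.C c2 * Polynomial.X ^ 2).coeff 0 = c0 := by
  simp only [Polynomial.coeff_add, Polynomial.coeff_C_mul, Polynomial.coeff_X_pow,
    Polynomial.coeff_C, Polynomial.coeff_X_zero]
  norm_num

lemma pc1 (c0 c1 c2 : ℝ) :
    (Polynomial.C c0 + Polynomial.C c1 * Polynomial.X
      + Polynomial.C c2 * Polynomial.X ^ 2).coeff 1 = c1 := by
  simp only [Polynomial.coeff_add, Polynomial.coeff_C_mul, Polynomial.coeff_X_pow,
    Polynomial.coeff_C, Polynomial.coeff_X_one]
  norm_num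

lemma pc2 (c0 c1 c2 : ℝ) :
    (Polynomial.C c0 + Polynomial.C c1 * Polynomial.X
      + Polynomial.C c2 * Polynomial.X ^ 2).coeff 2 = c2 := by
  simp only [Polynomial.coeff_add, Polynomial.coeff_C_mul, Polynomial.coeff_X_pow,
    Polynomial.coeff_C, Polynomial.coeff_X]
  norm_num

lemma key (F : Subfield ℝ) (t : ℝ)
    (htr : ∀ p : Polynomial ℝ, (∀ n, p.coeff n ∈ F) → Polynomial.eval t p = 0 → p = 0)
    (a0 a1 a2 b0 b1 b2 c0 : ℝ)
    (ha0 : a0 ∈ F) (ha1 : a1 ∈ F) (ha2 : a2 ∈ F)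
    (hb0 : b0 ∈ F) (hb1 : b1 ∈ F) (hb2 : b2 ∈ F)
    (hA : ¬(a0 = 0 ∧ a1 = 0 ∧ a2 = 0)) (h0 : ¬(a0 = 0 ∧ b0 = 0 ∧ c0 = 0))
    (x0 : ℂ)
    (e0 : (a0:ℂ) + a1 * x0 + a2 * x0 ^ 2 = 0)
    (e1 : x0 = (t:ℂ) * ((b0:ℂ) + b1 * x0 + b2 * x0 ^ 2))
    (e2c : x0 = 0 → c0 = 0) : False := by
  have ht0 : t ≠ 0 := by
    intro h
    have := htr Polynomial.X (fun n => by
      rcases n with _|_|n <;> simp [Polynomial.coeff_X] <;>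
        first | exact zero_mem F | exact one_mem F)
      (by simp [h])
    exact Polynomial.X_ne_zero this
  have htc : (t:ℂ) ≠ 0 := by exact_mod_cast ht0
  have hx0 : x0 ≠ 0 := by
    intro h
    subst h
    refine h0 ⟨?_, ?_, e2c rfl⟩
    · exact_mod_cast by simpa using e0
    · have h1 : (t:ℂ) * (b0:ℂ) = 0 := by linear_combination -e1
      rcases mul_eq_zero.mp h1 with h | h
      · exact absurd h htc
      · exact_mod_cast h
  by_cases ha2' : a2 = 0
  · have h2z : ((a2:ℝ):ℂ) = 0 := by exact_mod_cast ha2'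
    by_cases ha1' : a1 = 0
    · have h1z : ((a1:ℝ):ℂ) = 0 := by exact_mod_cast ha1'
      have : ((a0:ℝ):ℂ) = 0 := by rw [h1z, h2z] at e0; simpa using e0
      exact hA ⟨by exact_mod_cast this, ha1', ha2'⟩
    · have ha1c : ((a1:ℝ):ℂ) ≠ 0 := by exact_mod_cast ha1'
      have hx : x0 = ((-a0 / a1 : ℝ):ℂ) := by
        push_cast
        rw [eq_div_iff ha1c]
        linear_combination e0 - x0 ^ 2 * h2z
      obtain ⟨xr, hxr⟩ : ∃ x : ℝ, x = -a0 / a1 := ⟨_, rfl⟩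
      rw [← hxr] at hx
      rw [hx] at e1
      have hreal : xr = t * (b0 + b1 * xr + b2 * xr ^ 2) := by exact_mod_cast e1
      have hxrF : xr ∈ F := hxr ▸ F.div_mem (F.neg_mem ha0) ha1
      have hBF : (b0 + b1 * xr + b2 * xr ^ 2) ∈ F := F.add_mem (F.add_mem hb0
        (F.mul_mem hb1 hxrF)) (F.mul_mem hb2 (F.pow_mem hxrF 2))
      have hp := htr (Polynomial.C (-xr) + Polynomial.C (b0 + b1 * xr + b2 * xr ^ 2)
          * Polynomial.X + Polynomial.C 0 * Polynomial.X ^ 2)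
        (coeffs_mem F (F.neg_mem hxrF) hBF (zero_mem F))
        (by simp only [Polynomial.eval_add, Polynomial.eval_mul, Polynomial.eval_pow,
          Polynomial.eval_C, Polynomial.eval_X]; linear_combination -hreal)
      have hz : -xr = 0 := by
        have h' := Polynomial.ext_iff.mp hp 0
        rw [pc0] at h'
        simpa using h'
      apply hx0
      rw [hx]
      exact_mod_cast (show ((xr:ℝ):ℂ) = 0 by exact_mod_cast (by linarith : xr = (0:ℝ)))
  · -- a2 ≠ 0
    have ha2c : ((a2:ℝ):ℂ) ≠ 0 := by exact_mod_cast ha2'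
    obtain ⟨A, hA'⟩ : ∃ x : ℝ, x = b0 - b2 * a0 / a2 := ⟨_, rfl⟩
    obtain ⟨B, hB'⟩ : ∃ x : ℝ, x = b1 - b2 * a1 / a2 := ⟨_, rfl⟩
    have hAF : A ∈ F := hA' ▸ F.sub_mem hb0 (F.div_mem (F.mul_mem hb2 ha0) ha2)
    have hBF : B ∈ F := hB' ▸ F.sub_mem hb1 (F.div_mem (F.mul_mem hb2 ha1) ha2)
    have hsubst : (b0:ℂ) + b1 * x0 + b2 * x0 ^ 2 = (A:ℂ) + (B:ℂ) * x0 := by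
      rw [hA', hB']

      push_cast
      field_simp
      linear_combination ((b2:ℂ)) * e0
    have e1' : x0 * (1 - (t:ℂ) * B) = (t:ℂ) * A := by
      rw [hsubst] at e1; linear_combination e1
    have h1B : (1:ℝ) - t * B ≠ 0 := by
      intro h
      have hp := htr (Polynomial.C 1 + Polynomial.C (-B) * Polynomial.X
          + Polynomial.C 0 * Polynomial.X ^ 2)
        (coeffs_mem F (one_mem F) (F.neg_mem hBF) (zero_mem F))
        (by simp only [Polynomial.eval_add, Polynomial.eval_mul, Polynomial.eval_pow,
          Polynomial.eval_C, Polynomial.eval_X]; linear_combination h)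
      have h' := Polynomial.ext_iff.mp hp 0
      rw [pc0] at h'
      simpa using h'
    have h1Bc : (1 - (t:ℂ) * (B:ℝ)) ≠ 0 := fun hh => h1B (by
      exact_mod_cast (show ((1 - t * B : ℝ):ℂ) = 0 by push_cast; exact hh))
    obtain ⟨xr, hxr⟩ : ∃ x : ℝ, x = t * A / (1 - t * B) := ⟨_, rfl⟩
    have hx : x0 = (xr:ℂ) := by
      rw [hxr]
      push_cast
      rw [eq_div_iff h1Bc]
      linear_combination e1'
    have hre : a0 + a1 * xr + a2 * xr ^ 2 = 0 := by
      have : ((a0 + a1 * xr + a2 * xr ^ 2 : ℝ):ℂ) = 0 := by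
        push_cast
        rw [← hx]
        exact e0
      exact_mod_cast this
    have hmul : a0 * (1 - t*B)^2 + a1*A*t*(1 - t*B) + a2*A^2*t^2 = 0 := by
      have heq : a0 * (1 - t*B)^2 + a1*A*t*(1 - t*B) + a2*A^2*t^2
          = (1 - t*B)^2 * (a0 + a1 * xr + a2 * xr ^ 2) := by
        rw [hxr]; field_simp
      rw [heq, hre, mul_zero]
    have h2F : (2:ℝ) ∈ F := by
      have h := F.add_mem (one_mem F) (one_mem F)
      convert h using 1; norm_num
    have hp := htr (Polynomial.C a0 + Polynomial.C (a1 * A - 2 * a0 * B) * Polynomial.X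
        + Polynomial.C (a0 * B^2 - a1 * A * B + a2 * A^2) * Polynomial.X ^ 2)
      (coeffs_mem F ha0
        (F.sub_mem (F.mul_mem ha1 hAF) (F.mul_mem (F.mul_mem h2F ha0) hBF))
        (F.add_mem (F.sub_mem (F.mul_mem ha0 (F.pow_mem hBF 2))
          (F.mul_mem (F.mul_mem ha1 hAF) hBF)) (F.mul_mem ha2 (F.pow_mem hAF 2))))
      (by simp only [Polynomial.eval_add, Polynomial.eval_mul, Polynomial.eval_pow,
        Polynomial.eval_C, Polynomial.eval_X]; linear_combination hmul)
    have hc0 : a0 = 0 := by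
      have h' := Polynomial.ext_iff.mp hp 0; rw [pc0] at h'; simpa using h'
    have hc1 : a1 * A - 2 * a0 * B = 0 := by
      have h' := Polynomial.ext_iff.mp hp 1; rw [pc1] at h'; simpa using h'
    have hc2 : a0 * B^2 - a1 * A * B + a2 * A^2 = 0 := by
      have h' := Polynomial.ext_iff.mp hp 2; rw [pc2] at h'; simpa using h'
    have hAz : A = 0 := by
      have h : a2 * A ^ 2 = 0 := by linear_combination hc2 + B * hc1 + B^2 * hc0
      rcases mul_eq_zero.mp h with h | h
      · exact absurd h ha2'
      · exact pow_eq_zero_iff (by norm_num) |>.mp h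
    apply hx0
    rw [hx, hxr, hAz]
    simp



lemma degOf0_mul {a b : MvPolynomial (Fin 2) ℂ} (ha : a ≠ 0) (hb : b ≠ 0) :
    degreeOf 0 (a * b) = degreeOf 0 a + degreeOf 0 b := by
  have ha' : finSuccEquiv ℂ 1 a ≠ 0 := fun h => ha (by
    have := (finSuccEquiv ℂ 1).injective (h.trans (map_zero _).symm)
    simpa using this)
  have hb' : finSuccEquiv ℂ 1 b ≠ 0 := fun h => hb (by
    have := (finSuccEquiv ℂ 1).injective (h.trans (map_zero _).symm)
    simpa using this)
  have h := Polynomial.natDegree_mul ha' hb'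
  rw [← map_mul] at h
  rwa [natDegree_finSuccEquiv, natDegree_finSuccEquiv, natDegree_finSuccEquiv] at h

lemma degOf1_mul {a b : MvPolynomial (Fin 2) ℂ} (ha : a ≠ 0) (hb : b ≠ 0) :
    degreeOf 1 (a * b) = degreeOf 1 a + degreeOf 1 b := by
  have hswap : ∀ p : MvPolynomial (Fin 2) ℂ,
      degreeOf 1 p = degreeOf 0 (rename (Equiv.swap (0 : Fin 2) 1) p) := by
    intro p
    have := degreeOf_rename_of_injective (Equiv.swap (0 : Fin 2) 1).injective (p := p) 1
    simp only [Equiv.swap_apply_right] at this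
    exact this.symm
  rw [hswap, hswap a, hswap b, map_mul]
  have hra : rename (Equiv.swap (0:Fin 2) 1) a ≠ 0 := fun h =>
    ha ((rename_injective _ (Equiv.swap (0:Fin 2) 1).injective) (by simpa using h))
  have hrb : rename (Equiv.swap (0:Fin 2) 1) b ≠ 0 := fun h =>
    hb ((rename_injective _ (Equiv.swap (0:Fin 2) 1).injective) (by simpa using h))
  exact degOf0_mul hra hrb

lemma tdeg_le_sum (p : MvPolynomial (Fin 2) ℂ) :
    p.totalDegree ≤ degreeOf 0 p + degreeOf 1 p := by
  apply Finset.sup_le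
  intro m hm
  have h0 := degreeOf_le_iff.mp (le_refl (degreeOf 0 p)) m hm
  have h1 := degreeOf_le_iff.mp (le_refl (degreeOf 1 p)) m hm
  have hsum : (m.sum fun _ e => e) = m 0 + m 1 := by
    rw [Finsupp.sum_fintype _ _ (fun _ => rfl)]
    exact Fin.sum_univ_two _
  omega

lemma eq_C_of_tdeg0 {p : MvPolynomial (Fin 2) ℂ} (h : p.totalDegree = 0) :
    p = C (coeff 0 p) := by
  ext m
  rw [coeff_C]
  by_cases hm : m = 0
  · subst hm; simp
  · rw [if_neg (fun hh => hm hh.symm)]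
    by_contra hc
    have hms : m ∈ p.support := mem_support_iff.mpr hc
    have := (totalDegree_eq_zero_iff _ p).mp h m hms
    exact hm (Finsupp.ext this)

lemma tdeg_pos_of_nonunit {p : MvPolynomial (Fin 2) ℂ} (hp : p ≠ 0) (hu : ¬IsUnit p) :
    1 ≤ p.totalDegree := by
  by_contra h
  push_neg at h
  have h0 : p.totalDegree = 0 := by omega
  have hpc := eq_C_of_tdeg0 h0
  have hc : coeff 0 p ≠ 0 := fun hh => hp (by rw [hpc, hh, map_zero])
  exact hu (hpc ▸ (IsUnit.map (C : ℂ →+* MvPolynomial (Fin 2) ℂ) (Ne.isUnit hc)))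

lemma unit_tdeg0 {p : MvPolynomial (Fin 2) ℂ} (hu : IsUnit p) : p.totalDegree = 0 := by
  obtain ⟨q, hq⟩ := hu.exists_right_inv
  have hp0 : p ≠ 0 := fun h => by simp [h] at hq
  have hq0 : q ≠ 0 := fun h => by simp [h] at hq
  have h0 : degreeOf 0 p + degreeOf 0 q = 0 := by
    rw [← degOf0_mul hp0 hq0, hq, ← C_1]; exact degreeOf_C _ _
  have h1 : degreeOf 1 p + degreeOf 1 q = 0 := by
    rw [← degOf1_mul hp0 hq0, hq, ← C_1]; exact degreeOf_C _ _
  have := tdeg_le_sum p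
  omega


lemma degK0 : degreeOf 0 (kernelK d t) ≤ 2 := by
  unfold kernelK
  refine le_trans (degreeOf_sub_le _ _ _) (max_le ?_ ?_)
  · refine le_trans (degreeOf_mul_le _ _ _) ?_
    have h1 : degreeOf 0 (X 0 : MvPolynomial (Fin 2) ℂ) ≤ 1 := by
      rw [degreeOf_X]; simp
    have h2 : degreeOf 0 (X 1 : MvPolynomial (Fin 2) ℂ) ≤ 1 := by
      rw [degreeOf_X]; simp
    omega
  · refine le_trans (degreeOf_mul_le _ _ _) ?_
    rw [degreeOf_C, zero_add]
    refine le_trans (degreeOf_sum_le _ _ _) ?_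
    refine Finset.sup_le fun i hi => ?_
    refine le_trans (degreeOf_sum_le _ _ _) ?_
    refine Finset.sup_le fun j hj => ?_
    refine le_trans (degreeOf_mul_le _ _ _) ?_
    have hc : degreeOf 0 (C ((d ((i : ℤ) - 1) ((j : ℤ) - 1) : ℝ) : ℂ)
        * (X 0 : MvPolynomial (Fin 2) ℂ) ^ i) ≤ i := by
      refine le_trans (degreeOf_mul_le _ _ _) ?_
      rw [degreeOf_C, zero_add]
      refine le_trans (degreeOf_pow_le _ _ _) ?_
      rw [degreeOf_X]
      simp
    have hx1 : degreeOf 0 ((X 1 : MvPolynomial (Fin 2) ℂ) ^ j) ≤ 0 := by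
      refine le_trans (degreeOf_pow_le _ _ _) ?_
      rw [degreeOf_X]
      simp
    have : i ≤ 2 := by
      have := Finset.mem_range.mp hi; omega
    omega

lemma degK1 : degreeOf 1 (kernelK d t) ≤ 2 := by
  unfold kernelK
  refine le_trans (degreeOf_sub_le _ _ _) (max_le ?_ ?_)
  · refine le_trans (degreeOf_mul_le _ _ _) ?_
    have h1 : degreeOf 1 (X 0 : MvPolynomial (Fin 2) ℂ) ≤ 1 := by
      rw [degreeOf_X]; simp
    have h2 : degreeOf 1 (X 1 : MvPolynomial (Fin 2) ℂ) ≤ 1 := by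
      rw [degreeOf_X]; simp
    omega
  · refine le_trans (degreeOf_mul_le _ _ _) ?_
    rw [degreeOf_C, zero_add]
    refine le_trans (degreeOf_sum_le _ _ _) ?_
    refine Finset.sup_le fun i hi => ?_
    refine le_trans (degreeOf_sum_le _ _ _) ?_
    refine Finset.sup_le fun j hj => ?_
    refine le_trans (degreeOf_mul_le _ _ _) ?_
    have hc : degreeOf 1 (C ((d ((i : ℤ) - 1) ((j : ℤ) - 1) : ℝ) : ℂ)
        * (X 0 : MvPolynomial (Fin 2) ℂ) ^ i) ≤ 0 := by
      refine le_trans (degreeOf_mul_le _ _ _) ?_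
      rw [degreeOf_C, zero_add]
      refine le_trans (degreeOf_pow_le _ _ _) ?_
      rw [degreeOf_X]
      simp
    have hx1 : degreeOf 1 ((X 1 : MvPolynomial (Fin 2) ℂ) ^ j) ≤ j := by
      refine le_trans (degreeOf_pow_le _ _ _) ?_
      rw [degreeOf_X]
      simp
    have : j ≤ 2 := by
      have := Finset.mem_range.mp hj; omega
    omega

-- linear form lemmas
lemma linear_form0 {p : MvPolynomial (Fin 2) ℂ} (h0 : degreeOf 0 p ≤ 1)
    (h1 : degreeOf 1 p = 0) :
    p = C (coeff (Finsupp.single 0 1) p) * X 0 + C (coeff 0 p) := by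
  ext m
  by_cases hm0 : m = 0
  · subst hm0
    simp [coeff_X', Finsupp.single_eq_zero]
  by_cases hms : m = Finsupp.single 0 1
  · subst hms
    simp only [coeff_add, coeff_C_mul, coeff_X', if_pos rfl, mul_one, coeff_C,
      if_neg (fun hh : (0:Fin 2 →₀ ℕ) = Finsupp.single 0 1 => hm0 hh.symm), add_zero]
    simp
  rw [coeff_add, coeff_C_mul, coeff_X', coeff_C, if_neg (fun hh => hms hh.symm),
    if_neg (fun hh => hm0 hh.symm)]
  simp only [mul_zero, add_zero]
  by_contra hc
  have hmm : m ∈ p.support := mem_support_iff.mpr hc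
  have hb0 : m 0 ≤ 1 := degreeOf_le_iff.mp h0 m hmm
  have hb1 : m 1 = 0 := Nat.le_zero.mp (degreeOf_le_iff.mp (le_of_eq h1) m hmm)
  have hmeq : m = Finsupp.single 0 (m 0) := by
    apply Finsupp.ext
    intro i
    fin_cases i
    · simp
    · simp [hb1, Finsupp.single_apply]
  rcases (by omega : m 0 = 0 ∨ m 0 = 1) with h | h <;> rw [h] at hmeq
  · exact hm0 (by rw [hmeq]; exact Finsupp.single_zero 0)
  · exact hms hmeq


lemma linear_form1 {p : MvPolynomial (Fin 2) ℂ} (h0 : degreeOf 1 p ≤ 1)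
    (h1 : degreeOf 0 p = 0) :
    p = C (coeff (Finsupp.single 1 1) p) * X 1 + C (coeff 0 p) := by
  ext m
  by_cases hm0 : m = 0
  · subst hm0
    simp [coeff_X', Finsupp.single_eq_zero]
  by_cases hms : m = Finsupp.single 1 1
  · subst hms
    simp only [coeff_add, coeff_C_mul, coeff_X', if_pos rfl, mul_one, coeff_C,
      if_neg (fun hh : (0:Fin 2 →₀ ℕ) = Finsupp.single 1 1 => hm0 hh.symm), add_zero]
    simp
  rw [coeff_add, coeff_C_mul, coeff_X', coeff_C, if_neg (fun hh => hms hh.symm),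
    if_neg (fun hh => hm0 hh.symm)]
  simp only [mul_zero, add_zero]
  by_contra hc
  have hmm : m ∈ p.support := mem_support_iff.mpr hc
  have hb0 : m 1 ≤ 1 := degreeOf_le_iff.mp h0 m hmm
  have hb1 : m 0 = 0 := Nat.le_zero.mp (degreeOf_le_iff.mp (le_of_eq h1) m hmm)
  have hmeq : m = Finsupp.single 1 (m 1) := by
    apply Finsupp.ext
    intro i
    fin_cases i
    · simp [hb1, Finsupp.single_apply]
    · simp
  rcases (by omega : m 1 = 0 ∨ m 1 = 1) with h | h <;> rw [h] at hmeq
  · exact hm0 (by rw [hmeq]; exact Finsupp.single_zero 1)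
  · exact hms hmeq

lemma no_three
    (htr : ∀ p : Polynomial ℝ,
      (∀ n, p.coeff n ∈
        Subfield.closure
          {x : ℝ | ∃ i ∈ ({-1, 0, 1} : Set ℤ), ∃ j ∈ ({-1, 0, 1} : Set ℤ), x = d i j}) →
      Polynomial.eval t p = 0 → p = 0)
    (hx0 : ¬ (d (-1) (-1) = 0 ∧ d (-1) 0 = 0 ∧ d (-1) 1 = 0))
    (hy0 : ¬ (d (-1) (-1) = 0 ∧ d 0 (-1) = 0 ∧ d 1 (-1) = 0))
    (p1 p2 p3 : MvPolynomial (Fin 2) ℂ)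
    (hu1 : ¬IsUnit p1) (hu2 : ¬IsUnit p2) (hu3 : ¬IsUnit p3)
    (hne : p1 * p2 * p3 ≠ 0)
    (hKf : kernelK d t = -(p1 * p2 * p3)) : False := by
  set F := Subfield.closure
      {x : ℝ | ∃ i ∈ ({-1, 0, 1} : Set ℤ), ∃ j ∈ ({-1, 0, 1} : Set ℤ), x = d i j} with hF
  have hmem : ∀ i j : ℤ, i ∈ ({-1, 0, 1} : Set ℤ) → j ∈ ({-1, 0, 1} : Set ℤ) →
      d i j ∈ F := fun i j hi hj => Subfield.subset_closure ⟨i, hi, j, hj, rfl⟩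
  have hm1 : (-1 : ℤ) ∈ ({-1, 0, 1} : Set ℤ) := by norm_num
  have hm2 : (0 : ℤ) ∈ ({-1, 0, 1} : Set ℤ) := by norm_num
  have hm3 : (1 : ℤ) ∈ ({-1, 0, 1} : Set ℤ) := by norm_num
  have hp1 : p1 ≠ 0 := fun h => hne (by rw [h]; ring)
  have hp2 : p2 ≠ 0 := fun h => hne (by rw [h]; ring)
  have hp3 : p3 ≠ 0 := fun h => hne (by rw [h]; ring)
  have hprodK : p1 * p2 * p3 = -(kernelK d t) := by rw [hKf]; ring
  have hs0 : degreeOf 0 p1 + degreeOf 0 p2 + degreeOf 0 p3 ≤ 2 := by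
    have h12 : p1 * p2 ≠ 0 := mul_ne_zero hp1 hp2
    have := degOf0_mul (mul_ne_zero hp1 hp2) hp3
    rw [degOf0_mul hp1 hp2] at this
    rw [← this, hprodK, degreeOf_neg]
    exact degK0 d t
  have hs1 : degreeOf 1 p1 + degreeOf 1 p2 + degreeOf 1 p3 ≤ 2 := by
    have := degOf1_mul (mul_ne_zero hp1 hp2) hp3
    rw [degOf1_mul hp1 hp2] at this
    rw [← this, hprodK, degreeOf_neg]
    exact degK1 d t
  have hb1 : 1 ≤ degreeOf 0 p1 + degreeOf 1 p1 :=
    le_trans (tdeg_pos_of_nonunit hp1 hu1) (tdeg_le_sum p1)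
  have hb2 : 1 ≤ degreeOf 0 p2 + degreeOf 1 p2 :=
    le_trans (tdeg_pos_of_nonunit hp2 hu2) (tdeg_le_sum p2)
  have hb3 : 1 ≤ degreeOf 0 p3 + degreeOf 1 p3 :=
    le_trans (tdeg_pos_of_nonunit hp3 hu3) (tdeg_le_sum p3)
  -- some factor p with (degreeOf 0 p, degreeOf 1 p) = (1,0) or (0,1), p ∣ kernelK
  have hex : ∃ p : MvPolynomial (Fin 2) ℂ, p ∣ kernelK d t ∧
      ((degreeOf 0 p = 1 ∧ degreeOf 1 p = 0) ∨ (degreeOf 0 p = 0 ∧ degreeOf 1 p = 1)) := by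
    have hd1 : p1 ∣ kernelK d t := ⟨-(p2 * p3), by rw [hKf]; ring⟩
    have hd2 : p2 ∣ kernelK d t := ⟨-(p1 * p3), by rw [hKf]; ring⟩
    have hd3 : p3 ∣ kernelK d t := ⟨-(p1 * p2), by rw [hKf]; ring⟩
    have : (degreeOf 0 p1 + degreeOf 1 p1 = 1) ∨ (degreeOf 0 p2 + degreeOf 1 p2 = 1) ∨
        (degreeOf 0 p3 + degreeOf 1 p3 = 1) := by omega
    rcases this with h | h | h
    · exact ⟨p1, hd1, by omega⟩
    · exact ⟨p2, hd2, by omega⟩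
    · exact ⟨p3, hd3, by omega⟩
  obtain ⟨p, hdvd, hcase⟩ := hex
  have htcne : ((t : ℝ) : ℂ) ≠ 0 := by
    intro hh
    have ht0 : t ≠ 0 := by
      intro h
      have := htr Polynomial.X (fun n => by
        rcases n with _|_|n <;> simp [Polynomial.coeff_X] <;>
          first | exact zero_mem F | exact one_mem F)
        (by simp [h])
      exact Polynomial.X_ne_zero this
    exact ht0 (by exact_mod_cast hh)
  rcases hcase with ⟨hc0, hc1⟩ | ⟨hc0, hc1⟩
  · -- p = C a * X 0 + C c
    have hform := linear_form0 (le_of_eq hc0) hc1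
    set a := coeff (Finsupp.single 0 1) p with ha
    set c := coeff 0 p with hcc
    have hane : a ≠ 0 := by
      intro hh
      rw [hh] at hform
      have : degreeOf 0 p = 0 := by
        rw [hform, map_zero, zero_mul, zero_add]
        exact degreeOf_C _ _
      omega
    obtain ⟨q, hq⟩ := hdvd
    have hEy : ∀ y : ℂ, eval ![-c / a, y] (kernelK d t) = 0 := by
      intro y
      rw [hq, map_mul]
      have : eval ![-c / a, y] p = 0 := by
        rw [hform]
        simp only [map_add, map_mul, eval_C, eval_X]
        simp [Matrix.cons_val_zero]
        field_simp
        ring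
      rw [this, zero_mul]
    simp only [kernelK, Finset.sum_range_succ] at hEy
    simp [Finset.sum_range_succ] at hEy
    set x0 : ℂ := -c / a with hx0def
    have h1 := hEy 1
    have h2 := hEy (-1)
    have h0 := hEy 0
    have e0 : ((d (-1) (-1) : ℝ) : ℂ) + (d 0 (-1) : ℝ) * x0 + (d 1 (-1) : ℝ) * x0 ^ 2 = 0 := by
      have h0' : ((t : ℝ) : ℂ) * (((d (-1) (-1) : ℝ) : ℂ) + (d 0 (-1) : ℝ) * x0
          + (d 1 (-1) : ℝ) * x0 ^ 2) = 0 := by linear_combination -h0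
      rcases mul_eq_zero.mp h0' with h | h
      · exact absurd h htcne
      · exact h
    have e1 : x0 = ((t : ℝ) : ℂ) * (((d (-1) 0 : ℝ) : ℂ) + (d 0 0 : ℝ) * x0
        + (d 1 0 : ℝ) * x0 ^ 2) := by
      linear_combination ((1:ℂ)/2) * h1 - ((1:ℂ)/2) * h2
    have e2full : ((d (-1) 1 : ℝ) : ℂ) + (d 0 1 : ℝ) * x0 + (d 1 1 : ℝ) * x0 ^ 2 = 0 := by
      have h' : ((t : ℝ) : ℂ) * (((d (-1) 1 : ℝ) : ℂ) + (d 0 1 : ℝ) * x0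
          + (d 1 1 : ℝ) * x0 ^ 2) = 0 := by
        linear_combination (-(1:ℂ)/2) * h1 - ((1:ℂ)/2) * h2 - ((t : ℝ) : ℂ) * e0
      rcases mul_eq_zero.mp h' with h | h
      · exact absurd h htcne
      · exact h
    exact key F t htr (d (-1) (-1)) (d 0 (-1)) (d 1 (-1)) (d (-1) 0) (d 0 0) (d 1 0) (d (-1) 1)
      (hmem _ _ hm1 hm1) (hmem _ _ hm2 hm1) (hmem _ _ hm3 hm1)
      (hmem _ _ hm1 hm2) (hmem _ _ hm2 hm2) (hmem _ _ hm3 hm2)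
      hy0 hx0 x0 e0 e1
      (fun hz => by
        rw [hz] at e2full
        exact_mod_cast (by simpa using e2full))
  · -- p = C a * X 1 + C c
    have hform := linear_form1 (le_of_eq hc1) hc0
    set a := coeff (Finsupp.single 1 1) p with ha
    set c := coeff 0 p with hcc
    have hane : a ≠ 0 := by
      intro hh
      rw [hh] at hform
      have : degreeOf 1 p = 0 := by
        rw [hform, map_zero, zero_mul, zero_add]
        exact degreeOf_C _ _
      omega
    obtain ⟨q, hq⟩ := hdvd
    have hEy : ∀ x : ℂ, eval ![x, -c / a] (kernelK d t) = 0 := by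
      intro x
      rw [hq, map_mul]
      have : eval ![x, -c / a] p = 0 := by
        rw [hform]
        simp only [map_add, map_mul, eval_C, eval_X]
        simp [Matrix.cons_val_one]
        field_simp
        ring
      rw [this, zero_mul]
    simp only [kernelK, Finset.sum_range_succ] at hEy
    simp [Finset.sum_range_succ] at hEy
    set y0 : ℂ := -c / a with hy0def
    have h1 := hEy 1
    have h2 := hEy (-1)
    have h0 := hEy 0
    have e0 : ((d (-1) (-1) : ℝ) : ℂ) + (d (-1) 0 : ℝ) * y0 + (d (-1) 1 : ℝ) * y0 ^ 2 = 0 := by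
      have h0' : ((t : ℝ) : ℂ) * (((d (-1) (-1) : ℝ) : ℂ) + (d (-1) 0 : ℝ) * y0
          + (d (-1) 1 : ℝ) * y0 ^ 2) = 0 := by linear_combination -h0
      rcases mul_eq_zero.mp h0' with h | h
      · exact absurd h htcne
      · exact h
    have e1 : y0 = ((t : ℝ) : ℂ) * (((d 0 (-1) : ℝ) : ℂ) + (d 0 0 : ℝ) * y0
        + (d 0 1 : ℝ) * y0 ^ 2) := by
      linear_combination ((1:ℂ)/2) * h1 - ((1:ℂ)/2) * h2
    have e2full : ((d 1 (-1) : ℝ) : ℂ) + (d 1 0 : ℝ) * y0 + (d 1 1 : ℝ) * y0 ^ 2 = 0 := by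
      have h' : ((t : ℝ) : ℂ) * (((d 1 (-1) : ℝ) : ℂ) + (d 1 0 : ℝ) * y0
          + (d 1 1 : ℝ) * y0 ^ 2) = 0 := by
        linear_combination (-(1:ℂ)/2) * h1 - ((1:ℂ)/2) * h2 - ((t : ℝ) : ℂ) * e0
      rcases mul_eq_zero.mp h' with h | h
      · exact absurd h htcne
      · exact h
    exact key F t htr (d (-1) (-1)) (d (-1) 0) (d (-1) 1) (d 0 (-1)) (d 0 0) (d 0 1) (d 1 (-1))
      (hmem _ _ hm1 hm1) (hmem _ _ hm1 hm2) (hmem _ _ hm1 hm3)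
      (hmem _ _ hm2 hm1) (hmem _ _ hm2 hm2) (hmem _ _ hm2 hm3)
      hx0 hy0 y0 e0 e1
      (fun hz => by
        rw [hz] at e2full
        exact_mod_cast (by simpa using e2full))

/-- if the weights along each of the four boundary lines are not all zero
and `K = -f₁·f₂` with `f₁, f₂` nonconstant, then `f₁` and `f₂` are irreducible
in `ℂ[x,y]`. -/
theorem factors_irreducible (h : WalkHyp d t)
    (hx2 : ¬ (d 1 (-1) = 0 ∧ d 1 0 = 0 ∧ d 1 1 = 0))
    (hx0 : ¬ (d (-1) (-1) = 0 ∧ d (-1) 0 = 0 ∧ d (-1) 1 = 0))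
    (hy2 : ¬ (d (-1) 1 = 0 ∧ d 0 1 = 0 ∧ d 1 1 = 0))
    (hy0 : ¬ (d (-1) (-1) = 0 ∧ d 0 (-1) = 0 ∧ d 1 (-1) = 0))
    (f₁ f₂ : MvPolynomial (Fin 2) ℂ)
    (hf₁ : f₁.totalDegree ≠ 0) (hf₂ : f₂.totalDegree ≠ 0)
    (hK : kernelK d t = -(f₁ * f₂)) :
    Irreducible f₁ ∧ Irreducible f₂ := by
  obtain ⟨hrange, hsum, ⟨ht0, ht1⟩, htr⟩ := h
  have hf₁0 : f₁ ≠ 0 := fun hh => hf₁ (by rw [hh]; exact totalDegree_zero)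
  have hf₂0 : f₂ ≠ 0 := fun hh => hf₂ (by rw [hh]; exact totalDegree_zero)
  have hu₁ : ¬IsUnit f₁ := fun hu => hf₁ (unit_tdeg0 hu)
  have hu₂ : ¬IsUnit f₂ := fun hu => hf₂ (unit_tdeg0 hu)
  constructor
  · constructor
    · exact hu₁
    · intro a b hab
      by_contra hboth
      push_neg at hboth
      obtain ⟨hua, hub⟩ := hboth
      exact no_three d t htr hx0 hy0 a b f₂ hua hub hu₂
        (by rw [show a * b * f₂ = f₁ * f₂ by rw [hab]]; exact mul_ne_zero hf₁0 hf₂0)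
        (by rw [hK, hab])
  · constructor
    · exact hu₂
    · intro a b hab
      by_contra hboth
      push_neg at hboth
      obtain ⟨hua, hub⟩ := hboth
      exact no_three d t htr hx0 hy0 a b f₁ hua hub hu₁
        (by rw [show a * b * f₁ = f₁ * f₂ by rw [hab]; ring]; exact mul_ne_zero hf₁0 hf₂0)
        (by rw [hK, hab]; ring)

end
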